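/- Let p be a prime, and let A and B be commutative rings each of which is p-adically complete (complete and separated with respect to the topology defined by powers of the ideal (p)). Let f : A → B be a ring homomorphism for which there exists N > 0 such that (ker f)^N = 0 and such that for every b ∈ B the element b^{p^N} lies in the image of f. Let k be a perfect field of characteristic p. Then every ring homomorphism φ : W(k) → B lifts uniquely along f: there exists a unique ring homomorphism ψ : W(k) → A with f ∘ ψ = φ. -/

import Mathlib

open WittVector Finset

namespace WittLiftAux

variable {p : ℕ} [hp : Fact p.Prime]

/-! ### Arithmetic helpers -/

lemma N_lt_pow (N : ℕ) : N < p ^ N :=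
  lt_of_lt_of_le (Nat.lt_two_pow_self (n := N)) (Nat.pow_le_pow_left hp.out.two_le N)

lemma choose_dvd {N n i : ℕ} (h0 : i ≠ 0) (hiN : i < N) :
    p ^ (n + 1) ∣ (p ^ (n + 2 * N)).choose i := by
  have hppos := hp.out.pos
  have hpN : N < p ^ N := N_lt_pow N
  have hi_le : i ≤ p ^ (n + 2 * N) := by
    have h1 : p ^ N ≤ p ^ (n + 2 * N) := Nat.pow_le_pow_right hppos (by omega)
    omega
  have hmultdvd : p ^ (multiplicity p i) ∣ i := pow_multiplicity_dvd p i
  have hmlt : multiplicity p i < N := by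
    by_contra h
    push_neg at h
    have h1 : p ^ N ≤ p ^ multiplicity p i := Nat.pow_le_pow_right hppos h
    have h2 : p ^ multiplicity p i ≤ i := Nat.le_of_dvd (Nat.pos_of_ne_zero h0) hmultdvd
    omega
  have hkey := Nat.Prime.emultiplicity_choose_prime_pow hp.out hi_le h0
  apply pow_dvd_of_le_emultiplicity
  rw [hkey]
  have hle : n + 1 ≤ n + 2 * N - multiplicity p i := by omega
  exact_mod_cast hle

/-! ### Freshman's dream in rings where `p = 0` -/

lemma frob_add {R : Type*} [CommRing R] (hpR : (p : R) = 0) (x y : R) (m : ℕ) :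
    (x + y) ^ p ^ m = x ^ p ^ m + y ^ p ^ m := by
  obtain ⟨r, hr⟩ := (Commute.all x y).exists_add_pow_prime_pow_eq hp.out m
  rw [hr, hpR, zero_mul, zero_mul, zero_mul, add_zero]

lemma p_zero_quot {A : Type*} [CommRing A] :
    (p : A ⧸ Ideal.span {(p : A)}) = 0 := by
  rw [← map_natCast (Ideal.Quotient.mk (Ideal.span {(p : A)}))]
  exact Ideal.Quotient.eq_zero_iff_mem.mpr (Ideal.mem_span_singleton_self _)

/-! ### Witt vector helpers -/

lemma ghostComponent_zero_apply {R : Type*} [CommRing R] (z : WittVector p R) :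
    ghostComponent 0 z = z.coeff 0 := by
  rw [ghostComponent_apply, wittPolynomial_zero, MvPolynomial.aeval_X]

variable {k : Type*} [Field k] [CharP k p] [PerfectField k]

include hp

lemma coeff_zero_span {z : WittVector p k} (h : z.coeff 0 = 0) :
    z ∈ Ideal.span {(p : WittVector p k)} := by
  set w : WittVector p k := WittVector.mk p (fun i => z.coeff (i + 1)) with hw
  have hv : verschiebung w = z := by
    ext n
    cases n with
    | zero => rw [verschiebung_coeff_zero, h]
    | succ n => rw [verschiebung_coeff_succ, hw, WittVector.coeff_mk]
  have hz : z = (WittVector.frobeniusEquiv p k).symm w * p := by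
    rw [← verschiebung_frobenius ((WittVector.frobeniusEquiv p k).symm w)]
    rw [show WittVector.frobenius ((WittVector.frobeniusEquiv p k).symm w)
        = WittVector.frobeniusEquiv p k ((WittVector.frobeniusEquiv p k).symm w) from rfl]
    rw [RingEquiv.apply_symm_apply, hv]
  exact Ideal.mem_span_singleton'.mpr ⟨_, hz.symm⟩

lemma teich_add_sub_mem (α β : k) :
    teichmuller p α + teichmuller p β - teichmuller p (α + β)
      ∈ Ideal.span {(p : WittVector p k)} := by
  apply coeff_zero_span
  rw [← ghostComponent_zero_apply]
  rw [map_sub, map_add]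
  simp only [ghostComponent_teichmuller, pow_zero, pow_one]
  ring

/-- Iterated `p`-th roots in the perfect field `k`. -/
noncomputable def rt : ℕ → (k →+* k)
  | 0 => RingHom.id k
  | (n + 1) => (((_root_.frobeniusEquiv k p).symm : k ≃+* k) : k →+* k).comp (rt n)

lemma rt_succ_pow (n : ℕ) (a : k) : rt (p := p) (n + 1) a ^ p = rt (p := p) n a := by
  show ((_root_.frobeniusEquiv k p).symm (rt (p := p) n a)) ^ p = rt (p := p) n a
  exact _root_.frobeniusEquiv_symm_pow_p k p _

lemma rt_pow_shift (n m : ℕ) (a : k) : rt (p := p) (n + m) a ^ p ^ m = rt (p := p) n a := by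
  induction m with
  | zero => rw [Nat.add_zero, pow_zero, pow_one]
  | succ m ih =>
      have h : (n + (m + 1)) = (n + m) + 1 := by omega
      rw [h, pow_succ', pow_mul, rt_succ_pow, ih]

lemma rt_pow (n : ℕ) (a : k) : rt (p := p) n a ^ p ^ n = a := by
  have := rt_pow_shift (p := p) 0 n a
  rwa [Nat.zero_add] at this

lemma teich_pow (a : k) (m : ℕ) :
    (teichmuller p (a ^ m) : WittVector p k) = teichmuller p a ^ m :=
  map_pow (teichmuller p : k →* WittVector p k) a m

lemma teich_mul (a b : k) :
    (teichmuller p (a * b) : WittVector p k) = teichmuller p a * teichmuller p b :=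
  map_mul (teichmuller p : k →* WittVector p k) a b

/-! ### Teichmüller decomposition and extensionality -/

lemma teich_decomp (n : ℕ) (x : WittVector p k) :
    ∃ (a : ℕ → k) (y : WittVector p k),
      x = (∑ i ∈ Finset.range n, (p : WittVector p k) ^ i * teichmuller p (a i))
          + (p : WittVector p k) ^ n * y := by
  induction n with
  | zero => exact ⟨fun _ => 0, x, by simp⟩
  | succ n ih =>
      obtain ⟨a, y, hy⟩ := ih
      have h0 : (y - teichmuller p (y.coeff 0)).coeff 0 = 0 := by
        rw [← ghostComponent_zero_apply, map_sub, ghostComponent_zero_apply,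
          ghostComponent_zero_apply, teichmuller_coeff_zero, sub_self]
      obtain ⟨z, hz⟩ := Ideal.mem_span_singleton'.mp (coeff_zero_span h0)
      refine ⟨fun i => if i = n then y.coeff 0 else a i, z, ?_⟩
      rw [Finset.sum_range_succ]
      have hsum : ∑ i ∈ Finset.range n,
            (p : WittVector p k) ^ i * teichmuller p (if i = n then y.coeff 0 else a i)
          = ∑ i ∈ Finset.range n, (p : WittVector p k) ^ i * teichmuller p (a i) := by
        refine Finset.sum_congr rfl fun i hi => ?_
        rw [Finset.mem_range] at hi
        rw [if_neg hi.ne]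
      have hif : (if n = n then y.coeff 0 else a n) = y.coeff 0 := if_pos rfl
      rw [hsum]
      beta_reduce
      rw [hif]
      linear_combination hy - (p : WittVector p k) ^ n * hz

lemma ringHom_ext_teich {C : Type*} [CommRing C] [IsHausdorff (Ideal.span {(p : C)}) C]
    (χ₁ χ₂ : WittVector p k →+* C)
    (h : ∀ α, χ₁ (teichmuller p α) = χ₂ (teichmuller p α)) : χ₁ = χ₂ := by
  ext x
  rw [← sub_eq_zero]
  apply IsHausdorff.haus (inferInstance : IsHausdorff (Ideal.span {(p : C)}) C)
  intro n
  rw [smul_eq_mul, Ideal.mul_top, SModEq.zero]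
  obtain ⟨a, y, hy⟩ := teich_decomp n x
  rw [hy]
  have e1 : ∀ (χ : WittVector p k →+* C),
      χ ((∑ i ∈ Finset.range n, (p : WittVector p k) ^ i * teichmuller p (a i))
          + (p : WittVector p k) ^ n * y)
        = (∑ i ∈ Finset.range n, (p : C) ^ i * χ (teichmuller p (a i)))
          + (p : C) ^ n * χ y := by
    intro χ
    rw [map_add, map_mul, map_pow, map_natCast, map_sum]
    congr 1
    refine Finset.sum_congr rfl fun i _ => ?_
    rw [map_mul, map_pow, map_natCast]
  rw [e1, e1]
  have e2 : ∑ i ∈ Finset.range n, (p : C) ^ i * χ₁ (teichmuller p (a i))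
      = ∑ i ∈ Finset.range n, (p : C) ^ i * χ₂ (teichmuller p (a i)) :=
    Finset.sum_congr rfl fun i _ => by rw [h]
  rw [e2]
  have e3 : (∑ i ∈ Finset.range n, (p : C) ^ i * χ₂ (teichmuller p (a i))) + (p : C) ^ n * χ₁ y
      - ((∑ i ∈ Finset.range n, (p : C) ^ i * χ₂ (teichmuller p (a i))) + (p : C) ^ n * χ₂ y)
      = (p : C) ^ n * (χ₁ y - χ₂ y) := by ring
  rw [e3]
  exact Ideal.mul_mem_right _ _ (Ideal.pow_mem_pow (Ideal.mem_span_singleton_self _) n)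

/-! ### Theta: the ghost-component descent map -/

lemma Theta_ker_aux (A : Type*) [CommRing A] (n : ℕ) :
    RingHom.ker (WittVector.map (p := p) (Ideal.Quotient.mk (Ideal.span {(p : A)})))
      ≤ RingHom.ker ((Ideal.Quotient.mk ((Ideal.span {(p : A)}) ^ (n + 1))).comp
          (ghostComponent n)) := by
  intro x hx
  rw [RingHom.mem_ker] at hx ⊢
  rw [RingHom.comp_apply, Ideal.Quotient.eq_zero_iff_mem, ghostComponent_apply,
    aeval_wittPolynomial]
  apply Ideal.sum_mem
  intro i hi
  rw [Finset.mem_range] at hi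
  have hc : x.coeff i ∈ Ideal.span {(p : A)} := by
    have h1 : (WittVector.map (Ideal.Quotient.mk (Ideal.span {(p : A)})) x).coeff i = 0 := by
      rw [hx, WittVector.zero_coeff]
    rw [WittVector.map_coeff] at h1
    exact Ideal.Quotient.eq_zero_iff_mem.mp h1
  have h1 : (p : A) ^ i ∈ (Ideal.span {(p : A)}) ^ i :=
    Ideal.pow_mem_pow (Ideal.mem_span_singleton_self _) i
  have h2 : x.coeff i ^ p ^ (n - i) ∈ (Ideal.span {(p : A)}) ^ (n + 1 - i) := by
    have h3 := Ideal.pow_mem_pow hc (p ^ (n - i))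
    have h4 : (Ideal.span {(p : A)}) ^ (p ^ (n - i)) ≤ (Ideal.span {(p : A)}) ^ (n + 1 - i) :=
      Ideal.pow_le_pow_right (by have := N_lt_pow (p := p) (n - i); omega)
    exact h4 h3
  have h5 := Ideal.mul_mem_mul h1 h2
  rwa [← pow_add, show i + (n + 1 - i) = n + 1 by omega] at h5

noncomputable def Theta (A : Type*) [CommRing A] (n : ℕ) :
    WittVector p (A ⧸ Ideal.span {(p : A)}) →+* A ⧸ (Ideal.span {(p : A)}) ^ (n + 1) :=
  (WittVector.map (p := p) (Ideal.Quotient.mk (Ideal.span {(p : A)}))).liftOfRightInverse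
    (Function.surjInv (WittVector.map_surjective _ Ideal.Quotient.mk_surjective))
    (Function.rightInverse_surjInv (WittVector.map_surjective _ Ideal.Quotient.mk_surjective))
    ⟨(Ideal.Quotient.mk ((Ideal.span {(p : A)}) ^ (n + 1))).comp (ghostComponent n),
      Theta_ker_aux A n⟩

lemma Theta_mk (A : Type*) [CommRing A] (n : ℕ) (x : WittVector p A) :
    Theta A n (WittVector.map (Ideal.Quotient.mk (Ideal.span {(p : A)})) x)
      = Ideal.Quotient.mk ((Ideal.span {(p : A)}) ^ (n + 1)) (ghostComponent n x) :=
  RingHom.liftOfRightInverse_comp_apply _ _ _ _ x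

/-! ### The main construction -/

variable {A B : Type*} [CommRing A] [CommRing B]
variable (f : A →+* B) (N : ℕ) (φ : WittVector p k →+* B)

/-- A choice of preimage under `f` of `φ([rt n a])`. -/
noncomputable def U (hpow : ∀ b : B, ∃ a : A, f a = b ^ p ^ N) (n : ℕ) (a : k) : A :=
  Classical.choose (hpow (φ (teichmuller p (rt (p := p) (n + N) a))))

lemma fU (hpow : ∀ b : B, ∃ a : A, f a = b ^ p ^ N) (n : ℕ) (a : k) :
    f (U f N φ hpow n a) = φ (teichmuller p (rt (p := p) n a)) := by
  calc f (U f N φ hpow n a)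
      = φ (teichmuller p (rt (p := p) (n + N) a)) ^ p ^ N :=
        Classical.choose_spec (hpow (φ (teichmuller p (rt (p := p) (n + N) a))))
    _ = φ (teichmuller p (rt (p := p) n a)) := by
        rw [← map_pow, ← teich_pow (p := p) (rt (p := p) (n + N) a) (p ^ N), rt_pow_shift]

omit hp in
lemma pow_ker_bot (hker : RingHom.ker f ^ N = ⊥) {ε : A} (hε : ε ∈ RingHom.ker f) :
    ε ^ N = 0 := by
  have h : ε ^ N ∈ RingHom.ker f ^ N := Ideal.pow_mem_pow hε N
  rw [hker] at h
  exact Ideal.mem_bot.mp h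

lemma pow_congr_of_ker (hker : RingHom.ker f ^ N = ⊥) (c ε : A) (hε : ε ∈ RingHom.ker f)
    (n : ℕ) :
    (c + ε) ^ p ^ (n + 2 * N) - c ^ p ^ (n + 2 * N) ∈ Ideal.span {(p : A) ^ (n + 1)} := by
  rw [add_comm c ε, add_pow, Finset.sum_range_succ']
  have h0 : ε ^ 0 * c ^ (p ^ (n + 2 * N) - 0) * ((p ^ (n + 2 * N)).choose 0 : A)
      = c ^ p ^ (n + 2 * N) := by simp
  rw [h0, add_sub_cancel_right]
  apply Ideal.sum_mem
  intro i _
  by_cases hi : i + 1 < N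
  · obtain ⟨d, hd⟩ := choose_dvd (p := p) (N := N) (n := n) (Nat.succ_ne_zero i) hi
    have hcast : ((p ^ (n + 2 * N)).choose (i + 1) : A) = (p : A) ^ (n + 1) * (d : A) := by
      rw [hd]; push_cast; ring
    rw [hcast]
    exact Ideal.mem_span_singleton.mpr
      ⟨ε ^ (i + 1) * c ^ (p ^ (n + 2 * N) - (i + 1)) * (d : A), by ring⟩
  · have hz : ε ^ (i + 1) = 0 := by
      rw [show i + 1 = N + (i + 1 - N) by omega, pow_add, pow_ker_bot f N hker hε, zero_mul]
    rw [hz, zero_mul, zero_mul]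
    exact Ideal.zero_mem _

lemma pow_mem_span_p (hker : RingHom.ker f ^ N = ⊥)
    (hpow : ∀ b : B, ∃ a : A, f a = b ^ p ^ N) (δ : A)
    (hδ : f δ ∈ Ideal.span {(p : B)}) :
    δ ^ p ^ (2 * N) ∈ Ideal.span {(p : A)} := by
  obtain ⟨b, hb⟩ := Ideal.mem_span_singleton'.mp hδ
  obtain ⟨c, hc⟩ := hpow b
  set ι := δ ^ p ^ N - (p : A) ^ p ^ N * c with hι
  have hιker : ι ∈ RingHom.ker f := by
    rw [hι, RingHom.mem_ker, map_sub, map_pow, ← hb, map_mul, map_pow, map_natCast, hc, mul_pow]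
    ring
  have hdecomp : δ ^ (p ^ N * N) = ((p : A) ^ p ^ N * c + ι) ^ N := by
    have h1 : (p : A) ^ p ^ N * c + ι = δ ^ p ^ N := by rw [hι]; ring
    rw [h1, ← pow_mul]
  have key : δ ^ (p ^ N * N) ∈ Ideal.span {(p : A)} := by
    rw [hdecomp, add_pow]
    apply Ideal.sum_mem
    intro i hi
    rcases Nat.eq_zero_or_pos i with h0 | hpos
    · subst h0
      have hz : ι ^ (N - 0) = 0 := by
        rw [Nat.sub_zero]; exact pow_ker_bot f N hker hιker
      rw [hz, pow_zero, one_mul, zero_mul]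
      exact Ideal.zero_mem _
    · apply Ideal.mem_span_singleton.mpr
      have h1 : (p : A) ∣ (p : A) ^ p ^ N * c :=
        dvd_mul_of_dvd_left (dvd_pow_self _ (pow_pos hp.out.pos N).ne') c
      exact dvd_mul_of_dvd_left (dvd_mul_of_dvd_left (dvd_pow h1 hpos.ne') _) _
  have hle : p ^ N * N ≤ p ^ (2 * N) := by
    have h1 : N < p ^ N := N_lt_pow N
    calc p ^ N * N ≤ p ^ N * p ^ N := Nat.mul_le_mul_left _ (le_of_lt h1)
      _ = p ^ (2 * N) := by rw [← pow_add]; ring_nf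
  rw [show p ^ (2 * N) = p ^ N * N + (p ^ (2 * N) - p ^ N * N) by omega, pow_add]
  exact Ideal.mul_mem_right _ _ key

lemma mk_pow_eq (hker : RingHom.ker f ^ N = ⊥)
    (hpow : ∀ b : B, ∃ a : A, f a = b ^ p ^ N) (x y : A)
    (h : f (x - y) ∈ Ideal.span {(p : B)}) :
    Ideal.Quotient.mk (Ideal.span {(p : A)}) (x ^ p ^ (2 * N))
      = Ideal.Quotient.mk (Ideal.span {(p : A)}) (y ^ p ^ (2 * N)) := by
  have h2 : Ideal.Quotient.mk (Ideal.span {(p : A)}) ((x - y) ^ p ^ (2 * N)) = 0 :=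
    Ideal.Quotient.eq_zero_iff_mem.mpr (pow_mem_span_p f N hker hpow (x - y) h)
  have h3 : x = y + (x - y) := by ring
  calc Ideal.Quotient.mk (Ideal.span {(p : A)}) (x ^ p ^ (2 * N))
      = (Ideal.Quotient.mk (Ideal.span {(p : A)}) y
          + Ideal.Quotient.mk (Ideal.span {(p : A)}) (x - y)) ^ p ^ (2 * N) := by
        rw [← map_add, ← h3, map_pow]
    _ = (Ideal.Quotient.mk (Ideal.span {(p : A)}) y) ^ p ^ (2 * N)
          + (Ideal.Quotient.mk (Ideal.span {(p : A)}) (x - y)) ^ p ^ (2 * N) :=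
        frob_add p_zero_quot _ _ _
    _ = _ := by rw [← map_pow, ← map_pow, h2, add_zero]

/-- The compatible family of ring homomorphisms `k → A/p`. -/
noncomputable def Hmap (hker : RingHom.ker f ^ N = ⊥)
    (hpow : ∀ b : B, ∃ a : A, f a = b ^ p ^ N) (n : ℕ) :
    k →+* A ⧸ Ideal.span {(p : A)} :=
  RingHom.mk'
    { toFun := fun a =>
        Ideal.Quotient.mk (Ideal.span {(p : A)}) (U f N φ hpow (n + 2 * N) a ^ p ^ (2 * N))
      map_one' := by
        show Ideal.Quotient.mk (Ideal.span {(p : A)})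
            (U f N φ hpow (n + 2 * N) 1 ^ p ^ (2 * N)) = 1
        have h := mk_pow_eq f N hker hpow (U f N φ hpow (n + 2 * N) 1) 1 ?_
        · rw [h]; simp
        · rw [map_sub, fU]
          simp only [map_one, sub_self]
          exact Ideal.zero_mem _
      map_mul' := fun a b => by
        show Ideal.Quotient.mk (Ideal.span {(p : A)})
            (U f N φ hpow (n + 2 * N) (a * b) ^ p ^ (2 * N))
          = Ideal.Quotient.mk (Ideal.span {(p : A)})
              (U f N φ hpow (n + 2 * N) a ^ p ^ (2 * N))
            * Ideal.Quotient.mk (Ideal.span {(p : A)})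
              (U f N φ hpow (n + 2 * N) b ^ p ^ (2 * N))
        have h := mk_pow_eq f N hker hpow (U f N φ hpow (n + 2 * N) (a * b))
          (U f N φ hpow (n + 2 * N) a * U f N φ hpow (n + 2 * N) b) ?_
        · rw [h, mul_pow, map_mul]
        · rw [map_sub f, map_mul f, fU, fU, fU,
            map_mul (rt (p := p) (n + 2 * N)) a b,
            teich_mul (p := p) (rt (p := p) (n + 2 * N) a) (rt (p := p) (n + 2 * N) b),
            map_mul φ, sub_self]
          exact Ideal.zero_mem _ }
    (fun a b => by
      have h := mk_pow_eq f N hker hpow (U f N φ hpow (n + 2 * N) (a + b))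
        (U f N φ hpow (n + 2 * N) a + U f N φ hpow (n + 2 * N) b) ?_
      · show Ideal.Quotient.mk (Ideal.span {(p : A)})
            (U f N φ hpow (n + 2 * N) (a + b) ^ p ^ (2 * N))
          = Ideal.Quotient.mk (Ideal.span {(p : A)})
              (U f N φ hpow (n + 2 * N) a ^ p ^ (2 * N))
            + Ideal.Quotient.mk (Ideal.span {(p : A)})
              (U f N φ hpow (n + 2 * N) b ^ p ^ (2 * N))
        rw [h, map_pow, map_add, frob_add p_zero_quot, map_pow, map_pow]
      · rw [map_sub f, map_add f, fU, fU, fU, map_add (rt (p := p) (n + 2 * N)) a b]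
        obtain ⟨w, hw⟩ := Ideal.mem_span_singleton'.mp
          (teich_add_sub_mem (p := p) (rt (p := p) (n + 2 * N) a) (rt (p := p) (n + 2 * N) b))
        refine Ideal.mem_span_singleton'.mpr ⟨-φ w, ?_⟩
        have h9 : teichmuller p (rt (p := p) (n + 2 * N) a + rt (p := p) (n + 2 * N) b)
            - (teichmuller p (rt (p := p) (n + 2 * N) a)
               + teichmuller p (rt (p := p) (n + 2 * N) b))
            = -(w * (p : WittVector p k)) := by rw [hw]; ring
        calc -φ w * (p : B) = φ (-(w * (p : WittVector p k))) := by
              rw [map_neg, map_mul, map_natCast]; ring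
          _ = φ (teichmuller p (rt (p := p) (n + 2 * N) a + rt (p := p) (n + 2 * N) b)
              - (teichmuller p (rt (p := p) (n + 2 * N) a)
                 + teichmuller p (rt (p := p) (n + 2 * N) b))) := by rw [← h9]
          _ = φ (teichmuller p (rt (p := p) (n + 2 * N) a + rt (p := p) (n + 2 * N) b))
              - (φ (teichmuller p (rt (p := p) (n + 2 * N) a))
                 + φ (teichmuller p (rt (p := p) (n + 2 * N) b))) := by
              rw [map_sub φ, map_add φ (teichmuller p (rt (p := p) (n + 2 * N) a))
                (teichmuller p (rt (p := p) (n + 2 * N) b))])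

lemma Hmap_succ (hker : RingHom.ker f ^ N = ⊥)
    (hpow : ∀ b : B, ∃ a : A, f a = b ^ p ^ N) (n : ℕ) (a : k) :
    Hmap f N φ hker hpow n a = Hmap f N φ hker hpow (n + 1) a ^ p := by
  show Ideal.Quotient.mk (Ideal.span {(p : A)}) (U f N φ hpow (n + 2 * N) a ^ p ^ (2 * N))
      = Ideal.Quotient.mk (Ideal.span {(p : A)})
          (U f N φ hpow (n + 1 + 2 * N) a ^ p ^ (2 * N)) ^ p
  have h := mk_pow_eq f N hker hpow (U f N φ hpow (n + 2 * N) a)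
    (U f N φ hpow (n + 1 + 2 * N) a ^ p) ?_
  · rw [h, ← map_pow, pow_right_comm]
  · rw [map_sub, map_pow, fU, fU, ← map_pow φ,
      ← teich_pow (p := p) (rt (p := p) (n + 1 + 2 * N) a) p,
      show n + 1 + 2 * N = (n + 2 * N) + 1 by omega, rt_succ_pow, sub_self]
    exact Ideal.zero_mem _

/-- The approximations `ρₙ : W(k) → A/p^(n+1)`. -/
noncomputable def rho (hker : RingHom.ker f ^ N = ⊥)
    (hpow : ∀ b : B, ∃ a : A, f a = b ^ p ^ N) (n : ℕ) :
    WittVector p k →+* A ⧸ (Ideal.span {(p : A)}) ^ (n + 1) :=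
  (Theta A n).comp (WittVector.map (Hmap f N φ hker hpow n))

lemma rho_teich (hker : RingHom.ker f ^ N = ⊥)
    (hpow : ∀ b : B, ∃ a : A, f a = b ^ p ^ N) (n : ℕ) (α : k) :
    rho f N φ hker hpow n (teichmuller p α)
      = Ideal.Quotient.mk ((Ideal.span {(p : A)}) ^ (n + 1))
          (U f N φ hpow (n + 2 * N) α ^ p ^ (2 * N + n)) := by
  show Theta A n (WittVector.map (Hmap f N φ hker hpow n) (teichmuller p α)) = _
  rw [map_teichmuller]
  have hH : Hmap f N φ hker hpow n α
      = Ideal.Quotient.mk (Ideal.span {(p : A)})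
          (U f N φ hpow (n + 2 * N) α ^ p ^ (2 * N)) := rfl
  rw [hH, ← map_teichmuller p (Ideal.Quotient.mk (Ideal.span {(p : A)})), Theta_mk,
    ghostComponent_teichmuller, ← pow_mul, ← pow_add]

lemma rho_succ (hker : RingHom.ker f ^ N = ⊥)
    (hpow : ∀ b : B, ∃ a : A, f a = b ^ p ^ N) (n : ℕ) (x : WittVector p k) :
    Ideal.Quotient.factor (S := (Ideal.span {(p : A)}) ^ (n + 2)) (T := (Ideal.span {(p : A)}) ^ (n + 1))
        (Ideal.pow_le_pow_right (by omega)) (rho f N φ hker hpow (n + 1) x)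
      = rho f N φ hker hpow n x := by
  obtain ⟨w, hw⟩ := WittVector.map_surjective (p := p)
    (Ideal.Quotient.mk (Ideal.span {(p : A)})) Ideal.Quotient.mk_surjective
    (WittVector.map (Hmap f N φ hker hpow (n + 1)) x)
  have hl : rho f N φ hker hpow (n + 1) x
      = Ideal.Quotient.mk ((Ideal.span {(p : A)}) ^ (n + 2)) (ghostComponent (n + 1) w) := by
    show Theta A (n + 1) (WittVector.map (Hmap f N φ hker hpow (n + 1)) x) = _
    rw [← hw, Theta_mk]
  set w' : WittVector p A := WittVector.mk p (fun i => w.coeff i ^ p) with hw'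
  have hr : WittVector.map (Hmap f N φ hker hpow n) x
      = WittVector.map (Ideal.Quotient.mk (Ideal.span {(p : A)})) w' := by
    apply WittVector.ext
    intro i
    rw [WittVector.map_coeff, WittVector.map_coeff, hw', WittVector.coeff_mk, map_pow]
    have h1 : Ideal.Quotient.mk (Ideal.span {(p : A)}) (w.coeff i)
        = Hmap f N φ hker hpow (n + 1) (x.coeff i) := by
      have h2 := congrArg (fun z => z.coeff i) hw
      simpa [WittVector.map_coeff] using h2
    rw [h1, ← Hmap_succ]
  have hrho : rho f N φ hker hpow n x
      = Ideal.Quotient.mk ((Ideal.span {(p : A)}) ^ (n + 1)) (ghostComponent n w') := by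
    show Theta A n (WittVector.map (Hmap f N φ hker hpow n) x) = _
    rw [hr, Theta_mk]
  rw [hl, hrho, Ideal.Quotient.factor_mk, Ideal.Quotient.eq]
  rw [ghostComponent_apply, ghostComponent_apply, aeval_wittPolynomial, aeval_wittPolynomial]
  rw [Finset.sum_range_succ]
  have hterm : ∀ i ∈ Finset.range (n + 1),
      (p : A) ^ i * w.coeff i ^ p ^ (n + 1 - i) = (p : A) ^ i * w'.coeff i ^ p ^ (n - i) := by
    intro i hi
    rw [Finset.mem_range] at hi
    rw [hw', WittVector.coeff_mk, ← pow_mul]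
    congr 2
    rw [← pow_succ']
    congr 1
    omega
  rw [Finset.sum_congr rfl hterm, add_sub_cancel_left]
  exact Ideal.mul_mem_right _ _ (Ideal.pow_mem_pow (Ideal.mem_span_singleton_self _) _)

lemma rho_factor (hker : RingHom.ker f ^ N = ⊥)
    (hpow : ∀ b : B, ∃ a : A, f a = b ^ p ^ N) {m n : ℕ} (h : m ≤ n) (x : WittVector p k) :
    Ideal.Quotient.factor (S := (Ideal.span {(p : A)}) ^ (n + 1)) (T := (Ideal.span {(p : A)}) ^ (m + 1))
        (Ideal.pow_le_pow_right (by omega)) (rho f N φ hker hpow n x)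
      = rho f N φ hker hpow m x := by
  induction n with
  | zero =>
      obtain rfl : m = 0 := by omega
      obtain ⟨y, hy⟩ := Ideal.Quotient.mk_surjective (rho f N φ hker hpow 0 x)
      rw [← hy, Ideal.Quotient.factor_mk]
  | succ n ih =>
      rcases Nat.lt_or_ge m (n + 1) with hm | hm
      · have hmn : m ≤ n := by omega
        obtain ⟨y, hy⟩ := Ideal.Quotient.mk_surjective (rho f N φ hker hpow (n + 1) x)
        have hstep := rho_succ f N φ hker hpow n x
        rw [← hy, Ideal.Quotient.factor_mk] at hstep
        rw [← hy, Ideal.Quotient.factor_mk, ← ih hmn, ← hstep, Ideal.Quotient.factor_mk]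
      · obtain rfl : m = n + 1 := by omega
        obtain ⟨y, hy⟩ := Ideal.Quotient.mk_surjective (rho f N φ hker hpow (n + 1) x)
        rw [← hy, Ideal.Quotient.factor_mk]

lemma psi_exists [IsAdicComplete (Ideal.span {(p : A)}) A]
    (hker : RingHom.ker f ^ N = ⊥)
    (hpow : ∀ b : B, ∃ a : A, f a = b ^ p ^ N) (x : WittVector p k) :
    ∃ L : A, ∀ n,
      Ideal.Quotient.mk ((Ideal.span {(p : A)}) ^ (n + 1)) L = rho f N φ hker hpow n x := by
  choose s hs using fun n => Ideal.Quotient.mk_surjective (rho f N φ hker hpow n x)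
  have hC : ∀ {m n : ℕ}, m ≤ n →
      s m ≡ s n [SMOD ((Ideal.span {(p : A)}) ^ m • ⊤ : Submodule A A)] := by
    intro m n h
    rw [smul_eq_mul, Ideal.mul_top, SModEq.sub_mem]
    have h1 : Ideal.Quotient.mk ((Ideal.span {(p : A)}) ^ (m + 1)) (s n)
        = rho f N φ hker hpow m x := by
      rw [← rho_factor f N φ hker hpow h x, ← hs n, Ideal.Quotient.factor_mk]
    have h2 : s m - s n ∈ (Ideal.span {(p : A)}) ^ (m + 1) :=
      Ideal.Quotient.eq.mp (by rw [hs m, h1])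
    exact Ideal.pow_le_pow_right (by omega) h2
  have hpre : IsPrecomplete (Ideal.span {(p : A)}) A := inferInstance
  obtain ⟨L, hL⟩ := hpre.prec hC
  refine ⟨L, fun n => ?_⟩
  have h1 := hL (n + 1)
  rw [smul_eq_mul, Ideal.mul_top, SModEq.sub_mem] at h1
  have h2 : Ideal.Quotient.mk ((Ideal.span {(p : A)}) ^ (n + 1)) (s (n + 1))
      = rho f N φ hker hpow n x := by
    rw [← rho_factor f N φ hker hpow (Nat.le_succ n) x, ← hs (n + 1),
      Ideal.Quotient.factor_mk]
  rw [← h2]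
  apply Ideal.Quotient.eq.mpr
  simpa [neg_sub] using ((Ideal.span {(p : A)}) ^ (n + 1)).neg_mem h1

lemma psi_unique' [IsAdicComplete (Ideal.span {(p : A)}) A]
    (hker : RingHom.ker f ^ N = ⊥)
    (hpow : ∀ b : B, ∃ a : A, f a = b ^ p ^ N) {x : WittVector p k} {L L' : A}
    (h : ∀ n, Ideal.Quotient.mk ((Ideal.span {(p : A)}) ^ (n + 1)) L = rho f N φ hker hpow n x)
    (h' : ∀ n,
      Ideal.Quotient.mk ((Ideal.span {(p : A)}) ^ (n + 1)) L' = rho f N φ hker hpow n x) :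
    L = L' := by
  rw [← sub_eq_zero]
  have hH : IsHausdorff (Ideal.span {(p : A)}) A := inferInstance
  apply hH.haus
  intro n
  rw [smul_eq_mul, Ideal.mul_top, SModEq.zero]
  have h1 : L - L' ∈ (Ideal.span {(p : A)}) ^ (n + 1) :=
    Ideal.Quotient.eq.mp (by rw [h n, h' n])
  exact Ideal.pow_le_pow_right (by omega) h1

noncomputable def PsiFun [IsAdicComplete (Ideal.span {(p : A)}) A]
    (hker : RingHom.ker f ^ N = ⊥)
    (hpow : ∀ b : B, ∃ a : A, f a = b ^ p ^ N) (x : WittVector p k) : A :=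
  Classical.choose (psi_exists f N φ hker hpow x)

lemma Psi_spec [IsAdicComplete (Ideal.span {(p : A)}) A]
    (hker : RingHom.ker f ^ N = ⊥)
    (hpow : ∀ b : B, ∃ a : A, f a = b ^ p ^ N) (x : WittVector p k) (n : ℕ) :
    Ideal.Quotient.mk ((Ideal.span {(p : A)}) ^ (n + 1)) (PsiFun f N φ hker hpow x)
      = rho f N φ hker hpow n x :=
  Classical.choose_spec (psi_exists f N φ hker hpow x) n

noncomputable def Psi [IsAdicComplete (Ideal.span {(p : A)}) A]
    (hker : RingHom.ker f ^ N = ⊥)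
    (hpow : ∀ b : B, ∃ a : A, f a = b ^ p ^ N) : WittVector p k →+* A where
  toFun := PsiFun f N φ hker hpow
  map_one' := by
    apply psi_unique' f N φ hker hpow (x := 1) (Psi_spec f N φ hker hpow 1)
    intro n
    rw [map_one, map_one]
  map_mul' := fun x y => by
    apply psi_unique' f N φ hker hpow (x := x * y) (Psi_spec f N φ hker hpow (x * y))
    intro n
    rw [map_mul, map_mul, Psi_spec f N φ hker hpow x n, Psi_spec f N φ hker hpow y n]
  map_zero' := by
    apply psi_unique' f N φ hker hpow (x := 0) (Psi_spec f N φ hker hpow 0)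
    intro n
    rw [map_zero, map_zero]
  map_add' := fun x y => by
    apply psi_unique' f N φ hker hpow (x := x + y) (Psi_spec f N φ hker hpow (x + y))
    intro n
    rw [map_add, map_add, Psi_spec f N φ hker hpow x n, Psi_spec f N φ hker hpow y n]

lemma map_pow_span_mem {x : A} {n : ℕ} (hx : x ∈ (Ideal.span {(p : A)}) ^ n) :
    f x ∈ (Ideal.span {(p : B)}) ^ n := by
  rw [Ideal.span_singleton_pow] at hx ⊢
  obtain ⟨t, ht⟩ := Ideal.mem_span_singleton.mp hx
  apply Ideal.mem_span_singleton.mpr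
  exact ⟨f t, by rw [ht, map_mul, map_pow, map_natCast]⟩

end WittLiftAux

lemma WittLiftAux.Psi_apply {p : ℕ} [hp : Fact p.Prime] {k : Type*} [Field k] [CharP k p]
    [PerfectField k] {A B : Type*} [CommRing A] [CommRing B]
    [IsAdicComplete (Ideal.span {(p : A)}) A]
    (f : A →+* B) (N : ℕ) (φ : WittVector p k →+* B)
    (hker : RingHom.ker f ^ N = ⊥) (hpow : ∀ b : B, ∃ a : A, f a = b ^ p ^ N)
    (x : WittVector p k) :
    WittLiftAux.Psi f N φ hker hpow x = WittLiftAux.PsiFun f N φ hker hpow x := rfl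

/-- if `A, B` are `p`-adically complete commutative rings and `f : A → B` is a
uniform `F_p`-isomorphism (i.e. `(ker f)^N = 0` and every `b^{p^N}` is in the image, for some
`N > 0`), then every ring homomorphism `φ : W(k) → B`, for `k` a perfect field of
characteristic `p`, lifts uniquely along `f`. -/
theorem wittVector_lift_unique_of_uniform_Fp_iso (p : ℕ) [Fact p.Prime]
    (A B : Type*) [CommRing A] [CommRing B]
    [IsAdicComplete (Ideal.span {(p : A)}) A] [IsAdicComplete (Ideal.span {(p : B)}) B]
    (f : A →+* B) (N : ℕ) (hN : 0 < N)
    (hker : RingHom.ker f ^ N = ⊥)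
    (hpow : ∀ b : B, ∃ a : A, f a = b ^ p ^ N)
    (k : Type*) [Field k] [CharP k p] [PerfectField k]
    (φ : WittVector p k →+* B) :
    ∃! ψ : WittVector p k →+* A, f.comp ψ = φ := by
  classical
  refine ⟨WittLiftAux.Psi f N φ hker hpow, ?_, ?_⟩
  · apply WittLiftAux.ringHom_ext_teich (p := p)
    intro α
    rw [RingHom.comp_apply, ← sub_eq_zero]
    apply IsHausdorff.haus (inferInstance : IsHausdorff (Ideal.span {(p : B)}) B)
    intro n
    rw [smul_eq_mul, Ideal.mul_top, SModEq.zero]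
    apply Ideal.pow_le_pow_right (show n ≤ n + 1 by omega)
    have h1 : WittLiftAux.Psi f N φ hker hpow (WittVector.teichmuller p α)
        - WittLiftAux.U f N φ hpow (n + 2 * N) α ^ p ^ (2 * N + n)
        ∈ (Ideal.span {(p : A)}) ^ (n + 1) := by
      apply Ideal.Quotient.eq.mp
      rw [WittLiftAux.Psi_apply]
      exact (WittLiftAux.Psi_spec f N φ hker hpow (WittVector.teichmuller p α) n).trans
        (WittLiftAux.rho_teich f N φ hker hpow n α)
    have h2 := WittLiftAux.map_pow_span_mem f h1
    rw [map_sub] at h2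
    have h3 : f (WittLiftAux.U f N φ hpow (n + 2 * N) α ^ p ^ (2 * N + n))
        = φ (WittVector.teichmuller p α) := by
      have hrt : WittLiftAux.rt (p := p) (n + 2 * N) α ^ p ^ (2 * N + n) = α := by
        rw [show 2 * N + n = n + 2 * N by omega]
        exact WittLiftAux.rt_pow _ _
      rw [map_pow, WittLiftAux.fU, ← map_pow φ,
        ← WittLiftAux.teich_pow (p := p) (WittLiftAux.rt (p := p) (n + 2 * N) α)
          (p ^ (2 * N + n)),
        hrt]
    rwa [h3] at h2
  · intro ψ' hψ'
    apply WittLiftAux.ringHom_ext_teich (p := p)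
    intro α
    rw [← sub_eq_zero]
    apply IsHausdorff.haus (inferInstance : IsHausdorff (Ideal.span {(p : A)}) A)
    intro n
    rw [smul_eq_mul, Ideal.mul_top, SModEq.zero]
    apply Ideal.pow_le_pow_right (show n ≤ n + 1 by omega)
    set u := WittLiftAux.U f N φ hpow (n + 2 * N) α with hu_def
    have hε : ψ' (WittVector.teichmuller p (WittLiftAux.rt (p := p) (n + 2 * N) α)) - u
        ∈ RingHom.ker f := by
      rw [RingHom.mem_ker, map_sub, ← RingHom.comp_apply, hψ', hu_def, WittLiftAux.fU,
        sub_self]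
    have hmain := WittLiftAux.pow_congr_of_ker (p := p) f N hker u _ hε n
    have h4 : u + (ψ' (WittVector.teichmuller p (WittLiftAux.rt (p := p) (n + 2 * N) α)) - u)
        = ψ' (WittVector.teichmuller p (WittLiftAux.rt (p := p) (n + 2 * N) α)) := by ring
    rw [h4] at hmain
    have hT : ψ' (WittVector.teichmuller p (WittLiftAux.rt (p := p) (n + 2 * N) α))
          ^ p ^ (n + 2 * N)
        = ψ' (WittVector.teichmuller p α) := by
      rw [← map_pow,
        ← WittLiftAux.teich_pow (p := p) (WittLiftAux.rt (p := p) (n + 2 * N) α)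
          (p ^ (n + 2 * N)),
        WittLiftAux.rt_pow]
    have h1 : WittLiftAux.Psi f N φ hker hpow (WittVector.teichmuller p α)
        - u ^ p ^ (2 * N + n) ∈ (Ideal.span {(p : A)}) ^ (n + 1) := by
      apply Ideal.Quotient.eq.mp
      rw [WittLiftAux.Psi_apply]
      exact (WittLiftAux.Psi_spec f N φ hker hpow (WittVector.teichmuller p α) n).trans
        (WittLiftAux.rho_teich f N φ hker hpow n α)
    have h2 : ψ' (WittVector.teichmuller p α) - u ^ p ^ (n + 2 * N)
        ∈ (Ideal.span {(p : A)}) ^ (n + 1) := by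
      rw [← hT, Ideal.span_singleton_pow]
      exact hmain
    have h6 : u ^ p ^ (n + 2 * N) = u ^ p ^ (2 * N + n) := by
      rw [show n + 2 * N = 2 * N + n by omega]
    have h5 : ψ' (WittVector.teichmuller p α)
          - WittLiftAux.Psi f N φ hker hpow (WittVector.teichmuller p α)
        = (ψ' (WittVector.teichmuller p α) - u ^ p ^ (2 * N + n))
          - (WittLiftAux.Psi f N φ hker hpow (WittVector.teichmuller p α)
              - u ^ p ^ (2 * N + n)) := by ring
    rw [h5]
    exact Submodule.sub_mem _ (h6 ▸ h2) h1
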